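/- For each k ≥ 2, the number of irreducible elements of (ZMod 10)[X] of degree k−1, counted up to multiplication by units, equals (1/(k−1)) · Σ_{d | k−1} μ((k−1)/d) · (2^d + 5^d). -/

import Mathlib

open Polynomial


instance fact2' : Fact (Nat.Prime 2) := ⟨by norm_num⟩

instance fact5' : Fact (Nat.Prime 5) := ⟨by norm_num⟩

theorem prod_isUnit_iff {A B : Type*} [Monoid A] [Monoid B] {x : A × B} :
    IsUnit x ↔ IsUnit x.1 ∧ IsUnit x.2 := by
  constructor
  · exact fun h => ⟨h.map (MonoidHom.fst A B), h.map (MonoidHom.snd A B)⟩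
  · rintro ⟨⟨u, hu⟩, ⟨v, hv⟩⟩
    exact ⟨MulEquiv.prodUnits.symm (u, v), by simp [MulEquiv.prodUnits, hu, hv]⟩


theorem prod_irreducible_iff {A B : Type*} [CommMonoid A] [CommMonoid B] {x : A × B} :
    Irreducible x ↔ (Irreducible x.1 ∧ IsUnit x.2) ∨ (IsUnit x.1 ∧ Irreducible x.2) := by
  constructor
  · intro hx
    have hnu : ¬ (IsUnit x.1 ∧ IsUnit x.2) := fun h => hx.not_isUnit (prod_isUnit_iff.mpr h)
    have hfac : x = (x.1, 1) * (1, x.2) := by ext <;> simp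
    rcases hx.isUnit_or_isUnit hfac with h | h
    · -- x.1 is a unit
      have h1 : IsUnit x.1 := (prod_isUnit_iff.mp h).1
      refine Or.inr ⟨h1, ⟨fun hu => hnu ⟨h1, hu⟩, fun b c hbc => ?_⟩⟩
      have : x = (x.1, b) * (1, c) := by ext <;> simp [← hbc]
      rcases hx.isUnit_or_isUnit this with h' | h'
      · exact Or.inl (prod_isUnit_iff.mp h').2
      · exact Or.inr (prod_isUnit_iff.mp h').2
    · have h2 : IsUnit x.2 := (prod_isUnit_iff.mp h).2
      refine Or.inl ⟨⟨fun hu => hnu ⟨hu, h2⟩, fun b c hbc => ?_⟩, h2⟩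
      have : x = (b, x.2) * (c, 1) := by ext <;> simp [← hbc]
      rcases hx.isUnit_or_isUnit this with h' | h'
      · exact Or.inl (prod_isUnit_iff.mp h').1
      · exact Or.inr (prod_isUnit_iff.mp h').1
  · rintro (⟨hirr, hu⟩ | ⟨hu, hirr⟩)
    · refine ⟨fun h => hirr.not_isUnit (prod_isUnit_iff.mp h).1, fun b c hbc => ?_⟩
      have h1 : x.1 = b.1 * c.1 := by rw [hbc]; rfl
      have h2 : IsUnit (b.2 * c.2) := by rw [hbc] at hu; exact hu
      rcases hirr.isUnit_or_isUnit h1 with h | h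
      · exact Or.inl (prod_isUnit_iff.mpr ⟨h, isUnit_of_mul_isUnit_left h2⟩)
      · exact Or.inr (prod_isUnit_iff.mpr ⟨h, isUnit_of_mul_isUnit_right h2⟩)
    · refine ⟨fun h => hirr.not_isUnit (prod_isUnit_iff.mp h).2, fun b c hbc => ?_⟩
      have h1 : x.2 = b.2 * c.2 := by rw [hbc]; rfl
      have h2 : IsUnit (b.1 * c.1) := by rw [hbc] at hu; exact hu
      rcases hirr.isUnit_or_isUnit h1 with h | h
      · exact Or.inl (prod_isUnit_iff.mpr ⟨isUnit_of_mul_isUnit_left h2, h⟩)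
      · exact Or.inr (prod_isUnit_iff.mpr ⟨isUnit_of_mul_isUnit_right h2, h⟩)



lemma xq_dvd {R : Type*} [CommRing R] (p : ℕ) (hp : 1 < p) {d n : ℕ} (hdn : d ∣ n) :
    (X ^ p ^ d - X : R[X]) ∣ X ^ p ^ n - X := by
  have h1 : p ^ d - 1 ∣ p ^ n - 1 := by
    obtain ⟨m, rfl⟩ := hdn
    simpa only [pow_mul, one_pow] using Nat.sub_dvd_pow_sub_pow (p ^ d) 1 m
  obtain ⟨c, hc⟩ := h1
  have h2 : (X ^ (p ^ d - 1) - 1 : R[X]) ∣ X ^ (p ^ n - 1) - 1 := by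
    rw [hc, pow_mul]
    simpa only [one_pow] using sub_dvd_pow_sub_pow (X ^ (p ^ d - 1) : R[X]) 1 c
  have key : ∀ m : ℕ, 0 < p ^ m → (X ^ p ^ m - X : R[X]) = X * (X ^ (p ^ m - 1) - 1) := by
    intro m hm
    rw [mul_sub, mul_one, ← pow_succ', Nat.sub_add_cancel hm]
  rw [key d (pow_pos (by omega) d), key n (pow_pos (by omega) n)]
  exact mul_dvd_mul_left X h2

lemma sum_divisors_count (p n : ℕ) [hp : Fact p.Prime] (hn : n ≠ 0) :
    ∑ d ∈ n.divisors, (d : ℤ) *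
      Nat.card {f : Polynomial (ZMod p) // f.Monic ∧ Irreducible f ∧ f.natDegree = d}
      = (p : ℤ) ^ n := by
  classical
  set K := GaloisField p n with hK
  haveI : Fintype K := Fintype.ofFinite K
  have hint : ∀ x : K, IsIntegral (ZMod p) x := fun x => IsIntegral.of_finite _ x
  have hcard : Fintype.card K = p ^ n := by
    rw [← Nat.card_eq_fintype_card]; exact GaloisField.card p n hn
  have hpowcard : ∀ x : K, x ^ p ^ n = x := fun x => by
    conv_lhs => rw [← hcard]
    exact FiniteField.pow_card x
  have hne : (X ^ p ^ n - X : Polynomial (ZMod p)) ≠ 0 :=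
    FiniteField.X_pow_card_pow_sub_X_ne_zero _ hn hp.out.one_lt
  have hsplits : Splits ((X ^ p ^ n - X : Polynomial (ZMod p)).map (algebraMap (ZMod p) K)) :=
    SplittingField.splits (X ^ p ^ n - X : (ZMod p)[X])
  have hsep : (X ^ p ^ n - X : Polynomial (ZMod p)).Separable :=
    galois_poly_separable p (p ^ n) (dvd_pow_self p hn)
  set mp : K → Polynomial (ZMod p) := fun x => minpoly (ZMod p) x with hmp
  have himg : ∀ f ∈ Finset.univ.image mp, f.Monic ∧ Irreducible f ∧ f.natDegree ∣ n := by
    intro f hf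
    obtain ⟨x, -, rfl⟩ := Finset.mem_image.mp hf
    refine ⟨minpoly.monic (hint x), minpoly.irreducible (hint x), ?_⟩
    have h := minpoly.degree_dvd (hint x)
    rwa [GaloisField.finrank p hn] at h
  have hmem : ∀ f : Polynomial (ZMod p), f.Monic → Irreducible f → f.natDegree ∣ n →
      f ∈ Finset.univ.image mp := by
    intro f hmon hirr hdvd
    haveI : Fact (Irreducible f) := ⟨hirr⟩
    have hf0 : f ≠ 0 := hirr.ne_zero
    have hfr : minpoly (ZMod p) (AdjoinRoot.root f) = f := by
      rw [AdjoinRoot.minpoly_root hf0, hmon.leadingCoeff, inv_one, map_one, mul_one]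
    haveI : Module.Finite (ZMod p) (AdjoinRoot f) :=
      Module.Finite.of_basis (AdjoinRoot.powerBasis hf0).basis
    haveI : Finite (AdjoinRoot f) := Module.finite_of_finite (ZMod p)
    haveI : Fintype (AdjoinRoot f) := Fintype.ofFinite _
    have hcardL : Fintype.card (AdjoinRoot f) = p ^ f.natDegree := by
      rw [Module.card_eq_pow_finrank (K := ZMod p), ZMod.card,
        (AdjoinRoot.powerBasis hf0).finrank, AdjoinRoot.powerBasis_dim]
    have hdvd1 : f ∣ X ^ p ^ f.natDegree - X := by
      conv_lhs => rw [← hfr]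
      apply minpoly.dvd
      simp only [map_sub, aeval_X_pow, aeval_X]
      rw [← hcardL, FiniteField.pow_card, sub_self]
    have hdvd2 : f ∣ X ^ p ^ n - X := hdvd1.trans (xq_dvd p hp.out.one_lt hdvd)
    have hsp : Splits (f.map (algebraMap (ZMod p) K)) :=
      hsplits.of_dvd (Polynomial.map_ne_zero hne) (Polynomial.map_dvd _ hdvd2)
    obtain ⟨x, hx⟩ := hsp.exists_eval_eq_zero
      (by rw [degree_map, degree_eq_natDegree hf0]; exact_mod_cast Nat.cast_ne_zero.mpr hirr.natDegree_pos.ne')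
    have hxf : minpoly (ZMod p) x = f :=
      (minpoly.eq_of_irreducible_of_monic hirr (by rwa [aeval_def, ← eval_map]) hmon).symm
    exact Finset.mem_image.mpr ⟨x, Finset.mem_univ x, hxf⟩
  have hfiber : ∀ f ∈ Finset.univ.image mp,
      (Finset.univ.filter fun x : K => mp x = f).card = f.natDegree := by
    intro f hf
    obtain ⟨hmon, hirr, hdvd⟩ := himg f hf
    have hf0 : f ≠ 0 := hirr.ne_zero
    obtain ⟨x₀, -, hx₀⟩ := Finset.mem_image.mp hf
    have hdvd2 : f ∣ X ^ p ^ n - X := by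
      rw [← hx₀]
      apply minpoly.dvd
      simp only [map_sub, aeval_X_pow, aeval_X, hpowcard, sub_self]
    have hsepf : f.Separable := hsep.of_dvd hdvd2
    have hspf : Splits (f.map (algebraMap (ZMod p) K)) :=
      hsplits.of_dvd (Polynomial.map_ne_zero hne) (Polynomial.map_dvd _ hdvd2)
    have hroot := card_rootSet_eq_natDegree hsepf hspf
    rw [← hroot, ← Fintype.card_subtype]
    apply Fintype.card_congr
    apply Equiv.subtypeEquivRight
    intro x
    rw [mem_rootSet_of_ne hf0]
    constructor
    · rintro rfl; exact minpoly.aeval _ _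
    · intro h; exact (minpoly.eq_of_irreducible_of_monic hirr h hmon).symm
  -- the main ℕ-identity
  have main : ∑ d ∈ n.divisors,
      d * ((Finset.univ.image mp).filter (fun f => f.natDegree = d)).card = p ^ n := by
    have key := Finset.card_eq_sum_card_image mp Finset.univ
    rw [Finset.card_univ, hcard] at key
    rw [key]
    rw [← Finset.sum_fiberwise_of_maps_to
      (g := fun f => f.natDegree) (t := n.divisors)
      (fun f hf => Nat.mem_divisors.mpr ⟨(himg f hf).2.2, hn⟩)
      (fun f => (Finset.univ.filter fun x : K => mp x = f).card)]
    refine Finset.sum_congr rfl fun d hd => ?_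
    rw [Finset.sum_congr rfl (fun f hf => ?_), Finset.sum_const, smul_eq_mul, mul_comm]
    have hf' := Finset.mem_filter.mp hf
    rw [hfiber f hf'.1, hf'.2]
  -- identify Nat.card with finset card
  have cardeq : ∀ d ∈ n.divisors,
      Nat.card {f : Polynomial (ZMod p) // f.Monic ∧ Irreducible f ∧ f.natDegree = d}
        = ((Finset.univ.image mp).filter (fun f => f.natDegree = d)).card := by
    intro d hd
    obtain ⟨hddvd, -⟩ := Nat.mem_divisors.mp hd
    have hset : {f : Polynomial (ZMod p) | f.Monic ∧ Irreducible f ∧ f.natDegree = d}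
        = ((Finset.univ.image mp).filter (fun f => f.natDegree = d) : Set (Polynomial (ZMod p))) := by
      ext f
      simp only [Set.mem_setOf_eq, Finset.coe_filter, Finset.mem_coe, Set.mem_setOf_eq]
      constructor
      · rintro ⟨h1, h2, rfl⟩
        exact ⟨hmem f h1 h2 hddvd, rfl⟩
      · rintro ⟨hf, rfl⟩
        obtain ⟨h1, h2, -⟩ := himg f hf
        exact ⟨h1, h2, rfl⟩
    rw [← Set.ncard_coe_finset, ← hset]
    exact Nat.card_coe_set_eq _
  calc ∑ d ∈ n.divisors, (d : ℤ) *
        Nat.card {f : Polynomial (ZMod p) // f.Monic ∧ Irreducible f ∧ f.natDegree = d}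
      = ∑ d ∈ n.divisors,
        (d : ℤ) * ((Finset.univ.image mp).filter (fun f => f.natDegree = d)).card := by
        exact Finset.sum_congr rfl fun d hd => by rw [cardeq d hd]
    _ = (p : ℤ) ^ n := by exact_mod_cast congrArg (Nat.cast : ℕ → ℤ) main



instance finite_monic_irr (p d : ℕ) [NeZero p] :
    Finite {f : Polynomial (ZMod p) // f.Monic ∧ Irreducible f ∧ f.natDegree = d} := by
  apply Finite.of_injective
    (fun g : {f : Polynomial (ZMod p) // f.Monic ∧ Irreducible f ∧ f.natDegree = d} =>
      (fun i : Fin (d + 1) => (g : Polynomial (ZMod p)).coeff i))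
  intro g h hgh
  ext j
  by_cases hj : j ≤ d
  · exact congrFun hgh ⟨j, by omega⟩
  · rw [coeff_eq_zero_of_natDegree_lt, coeff_eq_zero_of_natDegree_lt]
    · rw [h.2.2.2]; omega
    · rw [g.2.2.2]; omega

lemma gauss_count (p n : ℕ) [hp : Fact p.Prime] (hn : n ≠ 0) :
    (n : ℤ) * Nat.card {f : Polynomial (ZMod p) // f.Monic ∧ Irreducible f ∧ f.natDegree = n} =
    ∑ d ∈ n.divisors, (ArithmeticFunction.moebius (n / d)) * (p : ℤ) ^ d := by
  have h := (ArithmeticFunction.sum_eq_iff_sum_smul_moebius_eq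
    (f := fun d => (d : ℤ) *
      Nat.card {f : Polynomial (ZMod p) // f.Monic ∧ Irreducible f ∧ f.natDegree = d})
    (g := fun m => (p : ℤ) ^ m)).mp
    (fun m hm => sum_divisors_count p m hm.ne') n (Nat.pos_of_ne_zero hn)
  rw [← h, ← Nat.sum_divisorsAntidiagonal'
    (f := fun a b => ((ArithmeticFunction.moebius a : ℤ)) * (p : ℤ) ^ b)]
  refine Finset.sum_congr rfl fun x _ => ?_
  rw [smul_eq_mul]



private lemma assoc_map {M N : Type*} [Monoid M] [Monoid N] (e : M ≃* N) {a b : M}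
    (h : Associated a b) : Associated (e a) (e b) := by
  obtain ⟨u, rfl⟩ := h
  exact ⟨Units.map e.toMonoidHom u, by simp⟩

def psi2 : ZMod 10 →+* ZMod 2 := ZMod.castHom (show 2 ∣ 10 by norm_num) (ZMod 2)
def psi5 : ZMod 10 →+* ZMod 5 := ZMod.castHom (show 5 ∣ 10 by norm_num) (ZMod 5)

private lemma hz : ∀ c : ZMod 10, psi2 c = 0 → psi5 c = 0 → c = 0 := by decide

private lemma rho_bij : Function.Bijective (fun c : ZMod 10 => (psi2 c, psi5 c)) := by decide

private noncomputable def phi10 :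
    Polynomial (ZMod 10) →+* Polynomial (ZMod 2) × Polynomial (ZMod 5) :=
  (mapRingHom psi2).prod (mapRingHom psi5)

private lemma phi10_apply (f : Polynomial (ZMod 10)) :
    phi10 f = (f.map psi2, f.map psi5) := rfl

private lemma phi10_bij : Function.Bijective phi10 := by
  constructor
  · rw [injective_iff_map_eq_zero]
    intro f hf
    have h2 : f.map psi2 = 0 := congrArg Prod.fst hf
    have h5 : f.map psi5 = 0 := congrArg Prod.snd hf
    ext j
    refine hz _ ?_ ?_
    · rw [← coeff_map, h2, coeff_zero]
    · rw [← coeff_map, h5, coeff_zero]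
  · rintro ⟨g, h⟩
    classical
    set σ := Equiv.ofBijective _ rho_bij with hσ
    set N := max g.natDegree h.natDegree + 1 with hN
    set f : Polynomial (ZMod 10) :=
      ∑ i ∈ Finset.range N, C (σ.symm (g.coeff i, h.coeff i)) * X ^ i with hf
    have hcoeff : ∀ j, f.coeff j =
        if j ∈ Finset.range N then σ.symm (g.coeff j, h.coeff j) else 0 := by
      intro j
      rw [hf, finset_sum_coeff]
      simp only [coeff_C_mul, coeff_X_pow, mul_ite, mul_one, mul_zero]
      exact Finset.sum_ite_eq (Finset.range N) j _
    have hval : ∀ c : ZMod 10, (psi2 c, psi5 c) = σ c := fun c => rfl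
    refine ⟨f, ?_⟩
    rw [phi10_apply]
    have key : ∀ j, (psi2 (f.coeff j), psi5 (f.coeff j)) = (g.coeff j, h.coeff j) := by
      intro j
      by_cases hj : j ∈ Finset.range N
      · rw [hval, hcoeff j, if_pos hj, σ.apply_symm_apply]
      · rw [hcoeff j, if_neg hj, map_zero, map_zero]
        simp only [Finset.mem_range, not_lt] at hj
        rw [coeff_eq_zero_of_natDegree_lt (by omega), coeff_eq_zero_of_natDegree_lt (by omega)]
    refine Prod.ext ?_ ?_
    · ext j; rw [coeff_map]; exact congrArg Prod.fst (key j)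
    · ext j; rw [coeff_map]; exact congrArg Prod.snd (key j)

private noncomputable def e10 :
    Polynomial (ZMod 10) ≃+* Polynomial (ZMod 2) × Polynomial (ZMod 5) :=
  RingEquiv.ofBijective phi10 phi10_bij

private lemma e10_apply (f : Polynomial (ZMod 10)) : e10 f = (f.map psi2, f.map psi5) := rfl

private lemma degmax (f : Polynomial (ZMod 10)) :
    f.natDegree = max (f.map psi2).natDegree (f.map psi5).natDegree := by
  apply le_antisymm
  · apply natDegree_le_iff_coeff_eq_zero.mpr
    intro j hj
    refine hz _ ?_ ?_
    · rw [← coeff_map]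
      exact coeff_eq_zero_of_natDegree_lt (lt_of_le_of_lt (le_max_left _ _) hj)
    · rw [← coeff_map]
      exact coeff_eq_zero_of_natDegree_lt (lt_of_le_of_lt (le_max_right _ _) hj)
  · exact max_le natDegree_map_le natDegree_map_le



instance fact2 : Fact (Nat.Prime 2) := ⟨by norm_num⟩
instance fact5 : Fact (Nat.Prime 5) := ⟨by norm_num⟩

lemma card_S (n : ℕ) :
    Nat.card {a : Associates (Polynomial (ZMod 10)) //
        ∃ f : Polynomial (ZMod 10), Irreducible f ∧ f.natDegree = n ∧ Associates.mk f = a}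
      = Nat.card {g : Polynomial (ZMod 2) // g.Monic ∧ Irreducible g ∧ g.natDegree = n}
      + Nat.card {g : Polynomial (ZMod 5) // g.Monic ∧ Irreducible g ∧ g.natDegree = n} := by
  classical
  rw [← Nat.card_sum]
  have hirr_symm : ∀ x : Polynomial (ZMod 2) × Polynomial (ZMod 5),
      Irreducible x → Irreducible (e10.symm x) := by
    intro x hx
    have h := MulEquiv.irreducible_iff (M := Polynomial (ZMod 10)) e10 (x := e10.symm x)
    rw [RingEquiv.apply_symm_apply] at h
    exact h.mp hx
  have hdeg2 : ∀ g : Polynomial (ZMod 2), (e10.symm (g, 1)).natDegree = g.natDegree := by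
    intro g
    have h := e10_apply (e10.symm (g, 1))
    rw [RingEquiv.apply_symm_apply] at h
    obtain ⟨hf, hs⟩ := Prod.ext_iff.mp h
    dsimp only at hf hs
    rw [degmax, ← hf, ← hs, natDegree_one]
    exact max_eq_left (Nat.zero_le _)
  have hdeg5 : ∀ g : Polynomial (ZMod 5), (e10.symm (1, g)).natDegree = g.natDegree := by
    intro g
    have h := e10_apply (e10.symm (1, g))
    rw [RingEquiv.apply_symm_apply] at h
    obtain ⟨hf, hs⟩ := Prod.ext_iff.mp h
    dsimp only at hf hs
    rw [degmax, ← hf, ← hs, natDegree_one]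
    exact max_eq_right (Nat.zero_le _)
  set Ψ : {g : Polynomial (ZMod 2) // g.Monic ∧ Irreducible g ∧ g.natDegree = n} ⊕
      {g : Polynomial (ZMod 5) // g.Monic ∧ Irreducible g ∧ g.natDegree = n} →
      {a : Associates (Polynomial (ZMod 10)) //
        ∃ f : Polynomial (ZMod 10), Irreducible f ∧ f.natDegree = n ∧ Associates.mk f = a} :=
    Sum.elim
      (fun g => ⟨Associates.mk (e10.symm (g.1, 1)), e10.symm (g.1, 1),
        hirr_symm _ (prod_irreducible_iff.mpr (Or.inl ⟨g.2.2.1, isUnit_one⟩)),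
        by rw [hdeg2]; exact g.2.2.2, rfl⟩)
      (fun g => ⟨Associates.mk (e10.symm (1, g.1)), e10.symm (1, g.1),
        hirr_symm _ (prod_irreducible_iff.mpr (Or.inr ⟨isUnit_one, g.2.2.1⟩)),
        by rw [hdeg5]; exact g.2.2.2, rfl⟩) with hΨ
  have hbij : Function.Bijective Ψ := by
    constructor
    · have assoc_of : ∀ x y : Polynomial (ZMod 2) × Polynomial (ZMod 5),
          Associates.mk (e10.symm x) = Associates.mk (e10.symm y) → Associated x y := by
        intro x y hxy
        have h := assoc_map e10.toMulEquiv (Associates.mk_eq_mk_iff_associated.mp hxy)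
        simpa using h
      rintro (⟨g, hg⟩ | ⟨g, hg⟩) (⟨g', hg'⟩ | ⟨g', hg'⟩) hψ <;>
        simp only [hΨ, Sum.elim_inl, Sum.elim_inr, Subtype.mk.injEq] at hψ
      · have h := (Prod.associated_iff.mp (assoc_of _ _ hψ)).1
        have : g = g' := eq_of_monic_of_associated hg.1 hg'.1 h
        subst this; rfl
      · have h := (Prod.associated_iff.mp (assoc_of _ _ hψ)).1
        exact absurd (associated_one_iff_isUnit.mp h) hg.2.1.not_isUnit
      · have h := (Prod.associated_iff.mp (assoc_of _ _ hψ)).2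
        exact absurd (associated_one_iff_isUnit.mp h) hg.2.1.not_isUnit
      · have h := (Prod.associated_iff.mp (assoc_of _ _ hψ)).2
        have : g = g' := eq_of_monic_of_associated hg.1 hg'.1 h
        subst this; rfl
    · rintro ⟨a, f, hfi, hfd, rfl⟩
      have hx : Irreducible ((f.map psi2, f.map psi5) : Polynomial (ZMod 2) × Polynomial (ZMod 5)) := by
        rw [← e10_apply]
        exact (MulEquiv.irreducible_iff (M := Polynomial (ZMod 10)) e10).mpr hfi
      rcases prod_irreducible_iff.mp hx with ⟨h2, h5⟩ | ⟨h2, h5⟩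
      · set g := normalize (f.map psi2) with hgdef
        have hgm : g.Monic := monic_normalize h2.ne_zero
        have hgi : Irreducible g := (associated_normalize _).irreducible h2
        have hgd : g.natDegree = n := by
          have hd5 : (f.map psi5).natDegree = 0 := natDegree_eq_zero_of_isUnit h5
          have h1 : g.natDegree = (f.map psi2).natDegree := by
            simp [hgdef, natDegree, degree_normalize]
          have h2' := degmax f
          rw [hd5, max_eq_left (Nat.zero_le _)] at h2'
          rw [h1, ← h2', hfd]
        refine ⟨Sum.inl ⟨g, hgm, hgi, hgd⟩, ?_⟩
        apply Subtype.ext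
        simp only [hΨ, Sum.elim_inl]
        rw [Associates.mk_eq_mk_iff_associated]
        have hassoc : Associated ((g, 1) : Polynomial (ZMod 2) × Polynomial (ZMod 5)) (e10 f) := by
          rw [e10_apply]
          exact Prod.associated_iff.mpr
            ⟨normalize_associated _, (associated_one_iff_isUnit.mpr h5).symm⟩
        have h := assoc_map e10.symm.toMulEquiv hassoc
        simpa using h
      · set g := normalize (f.map psi5) with hgdef
        have hgm : g.Monic := monic_normalize h5.ne_zero
        have hgi : Irreducible g := (associated_normalize _).irreducible h5
        have hgd : g.natDegree = n := by
          have hd2 : (f.map psi2).natDegree = 0 := natDegree_eq_zero_of_isUnit h2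
          have h1 : g.natDegree = (f.map psi5).natDegree := by
            simp [hgdef, natDegree, degree_normalize]
          have h2' := degmax f
          rw [hd2, max_eq_right (Nat.zero_le _)] at h2'
          rw [h1, ← h2', hfd]
        refine ⟨Sum.inr ⟨g, hgm, hgi, hgd⟩, ?_⟩
        apply Subtype.ext
        simp only [hΨ, Sum.elim_inr]
        rw [Associates.mk_eq_mk_iff_associated]
        have hassoc : Associated ((1, g) : Polynomial (ZMod 2) × Polynomial (ZMod 5)) (e10 f) := by
          rw [e10_apply]
          exact Prod.associated_iff.mpr
            ⟨(associated_one_iff_isUnit.mpr h2).symm, normalize_associated _⟩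
        have h := assoc_map e10.symm.toMulEquiv hassoc
        simpa using h
  exact (Nat.card_eq_of_bijective Ψ hbij).symm



theorem count_carryless_primes (k : ℕ) (hk : 2 ≤ k) :
    ((k - 1 : ℕ) : ℤ) *
      Nat.card {a : Associates (Polynomial (ZMod 10)) //
        ∃ f : Polynomial (ZMod 10), Irreducible f ∧ f.natDegree = k - 1 ∧ Associates.mk f = a} =
    ∑ d ∈ (k - 1).divisors, (ArithmeticFunction.moebius ((k - 1) / d)) * ((2 : ℤ) ^ d + 5 ^ d) := by
  set n := k - 1 with hn
  have hn0 : n ≠ 0 := by omega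
  rw [card_S n, Nat.cast_add, mul_add, gauss_count 2 n hn0, gauss_count 5 n hn0,
    ← Finset.sum_add_distrib]
  refine Finset.sum_congr rfl fun d hd => ?_
  push_cast
  ring
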